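/- For ω ∈ {−1,1}^d and a fixed unit vector u ∈ ℝ^d, let t_ω := ε·ω/√d + √(1−ε²)·u and θ_ω := t_ω/‖t_ω‖, where 0 < ε and ε/√d ≤ 1/8 and |⟨u,ω⟩| < 2 for all ω considered. Then for all such ω, ω': (ε/√d)(√h(ω,ω') − 4) ≤ ‖θ_ω − θ_{ω'}‖ ≤ (8ε/√d)·√h(ω,ω'), where h is the Hamming distance. Moreover, if in addition h(ω,ω') ≥ d/4 and d ≥ 4·64, then ‖θ_ω − θ_{ω'}‖ ≥ (ε/(2√d))·√h(ω,ω') ≥ ε/4. -/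

import Mathlib

set_option maxHeartbeats 1000000


/-- Separation of the perturbed unit vectors `θ_ω = t_ω/‖t_ω‖`, `t_ω = εω/√d + √(1−ε²)u`:
`(ε/√d)(√h(ω,ω') − 4) ≤ ‖θ_ω − θ_{ω'}‖ ≤ (8ε/√d)√h(ω,ω')`, and if moreover
`h(ω,ω') ≥ d/4` and `d ≥ 4·64`, then
`‖θ_ω − θ_{ω'}‖ ≥ (ε/(2√d))√h(ω,ω') ≥ ε/4`. -/
theorem theta_omega_separation
    (d : ℕ) (hd : 1 ≤ d) (u : EuclideanSpace ℝ (Fin d)) (hu : ‖u‖ = 1)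
    (ε : ℝ) (hε : 0 < ε) (hε1 : ε ≤ 1) (hεd : ε / Real.sqrt d ≤ 1 / 8)
    (ω ω' : EuclideanSpace ℝ (Fin d))
    (hω : ∀ j, ω j = 1 ∨ ω j = -1) (hω' : ∀ j, ω' j = 1 ∨ ω' j = -1)
    (huω : |∑ j, u j * ω j| < 2) (huω' : |∑ j, u j * ω' j| < 2) :
    let t : EuclideanSpace ℝ (Fin d) → EuclideanSpace ℝ (Fin d) :=
      fun w => (ε / Real.sqrt d) • w + Real.sqrt (1 - ε ^ 2) • u
    let θ : EuclideanSpace ℝ (Fin d) → EuclideanSpace ℝ (Fin d) :=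
      fun w => ‖t w‖⁻¹ • t w
    let h : ℝ := ((Finset.univ.filter fun j => ω j ≠ ω' j).card : ℝ)
    (ε / Real.sqrt d) * (Real.sqrt h - 4) ≤ ‖θ ω - θ ω'‖
    ∧ ‖θ ω - θ ω'‖ ≤ (8 * ε / Real.sqrt d) * Real.sqrt h
    ∧ ((d : ℝ) / 4 ≤ h → 4 * 64 ≤ d →
        (ε / (2 * Real.sqrt d)) * Real.sqrt h ≤ ‖θ ω - θ ω'‖ ∧ ε / 4 ≤ ‖θ ω - θ ω'‖) := by
  intro t θ h
  have ht : ∀ w, t w = (ε / Real.sqrt d) • w + Real.sqrt (1 - ε ^ 2) • u := fun w => rfl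
  have hθ : ∀ w, θ w = ‖t w‖⁻¹ • t w := fun w => rfl
  have hhdef : h = ((Finset.univ.filter fun j => ω j ≠ ω' j).card : ℝ) := rfl
  clear_value t θ h
  have hd0 : (0:ℝ) < d := by exact_mod_cast Nat.lt_of_lt_of_le Nat.zero_lt_one hd
  set sd := Real.sqrt d with hsddef
  have hsd0 : 0 < sd := Real.sqrt_pos.mpr hd0
  have hsdsq : sd ^ 2 = d := Real.sq_sqrt hd0.le
  have hh0 : (0:ℝ) ≤ h := by rw [hhdef]; exact Nat.cast_nonneg _
  have hsh0 : 0 ≤ Real.sqrt h := Real.sqrt_nonneg _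
  have hesd : ε / sd ≤ 1 / 8 := hεd
  have hesd0 : 0 < ε / sd := div_pos hε hsd0
  have hsq1 : Real.sqrt (1 - ε ^ 2) ^ 2 = 1 - ε ^ 2 := Real.sq_sqrt (by nlinarith)
  have hsqle1 : Real.sqrt (1 - ε ^ 2) ≤ 1 := Real.sqrt_le_one.mpr (by nlinarith)
  -- norm of t w is close to 1
  have key : ∀ w : EuclideanSpace ℝ (Fin d), (∀ j, w j = 1 ∨ w j = -1) →
      |∑ j, u j * w j| < 2 → |‖t w‖ - 1| ≤ 4 * (ε / sd) := by
    intro w hw hin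
    have hnw : ‖w‖ ^ 2 = d := by
      rw [← real_inner_self_eq_norm_sq]
      rw [PiLp.inner_apply]
      have hj : ∀ j, (inner ℝ (w j) (w j) : ℝ) = 1 := by
        intro j
        rcases hw j with h1 | h1 <;> simp [h1]
      rw [Finset.sum_congr rfl fun j _ => hj j]
      simp
    have hexp : ‖t w‖ ^ 2 = 1 + 2 * ((ε / sd) * Real.sqrt (1 - ε ^ 2)) * ∑ j, u j * w j := by
      have h1 : ‖t w‖ ^ 2 = ‖(ε / sd) • w‖ ^ 2
          + 2 * inner ℝ ((ε / sd) • w) (Real.sqrt (1 - ε ^ 2) • u) + ‖Real.sqrt (1 - ε ^ 2) • u‖ ^ 2 := by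
        rw [ht]; exact norm_add_sq_real _ _
      have h2 : ‖(ε / sd) • w‖ ^ 2 = ε ^ 2 := by
        rw [norm_smul, mul_pow, hnw]
        rw [Real.norm_eq_abs, sq_abs, div_pow, hsdsq]
        field_simp
      have h3 : ‖Real.sqrt (1 - ε ^ 2) • u‖ ^ 2 = 1 - ε ^ 2 := by
        rw [norm_smul, mul_pow, hu, Real.norm_eq_abs, sq_abs, hsq1]
        ring
      have h4 : (inner ℝ ((ε / sd) • w) (Real.sqrt (1 - ε ^ 2) • u) : ℝ)
          = (ε / sd) * Real.sqrt (1 - ε ^ 2) * ∑ j, u j * w j := by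
        rw [real_inner_smul_left, real_inner_smul_right, PiLp.inner_apply]
        have hj : ∀ j, (inner ℝ (w j) (u j) : ℝ) = u j * w j := by
          intro j; simp [RCLike.inner_apply, mul_comm]
        rw [Finset.sum_congr rfl fun j _ => hj j]
        ring
      rw [h1, h2, h3, h4]; ring
    have habs : |‖t w‖ ^ 2 - 1| ≤ 4 * (ε / sd) := by
      rw [hexp]
      rw [show (1:ℝ) + 2 * ((ε / sd) * Real.sqrt (1 - ε ^ 2)) * ∑ j, u j * w j - 1
        = 2 * ((ε / sd) * Real.sqrt (1 - ε ^ 2)) * ∑ j, u j * w j by ring]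
      rw [abs_mul]
      have h5 : |2 * ((ε / sd) * Real.sqrt (1 - ε ^ 2))| ≤ 2 * (ε / sd) := by
        rw [abs_of_nonneg (by positivity)]
        nlinarith [Real.sqrt_nonneg (1 - ε ^ 2)]
      nlinarith [abs_nonneg (∑ j, u j * w j), hin.le,
        abs_nonneg (2 * ((ε / sd) * Real.sqrt (1 - ε ^ 2)))]
    have hn0 : (0:ℝ) ≤ ‖t w‖ := norm_nonneg _
    set e := ε / sd with hedef
    set x := ‖t w‖ with hxdef
    clear_value x
    rw [abs_le] at habs ⊢
    obtain ⟨hl, hr⟩ := habs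
    have hx2 : x ^ 2 = x * x := sq x
    constructor
    · by_contra hcon
      push_neg at hcon
      have hxx : x * x ≤ (1 - 4 * e) * (1 - 4 * e) :=
        mul_le_mul (by linarith) (by linarith) hn0 (by linarith)
      have hex : (1 - 4 * e) * (1 - 4 * e) = 1 - 8 * e + 16 * (e * e) := by ring
      have he2 : e * e ≤ 1 / 8 * e := mul_le_mul_of_nonneg_right hesd hesd0.le
      linarith
    · have hex : (x - 1) ^ 2 = x ^ 2 - 2 * x + 1 := by ring
      linarith [sq_nonneg (x - 1)]
  have hkω := key ω hω huω
  have hkω' := key ω' hω' huω'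
  have hbd : 4 * (ε / sd) ≤ 1 / 2 := by linarith
  have haω : 1 / 2 ≤ ‖t ω‖ ∧ ‖t ω‖ ≤ 3 / 2 := by
    rw [abs_le] at hkω; constructor <;> linarith [hkω.1, hkω.2]
  have haω' : 1 / 2 ≤ ‖t ω'‖ ∧ ‖t ω'‖ ≤ 3 / 2 := by
    rw [abs_le] at hkω'; constructor <;> linarith [hkω'.1, hkω'.2]
  have haωpos : (0:ℝ) < ‖t ω‖ := by linarith [haω.1]
  have haω'pos : (0:ℝ) < ‖t ω'‖ := by linarith [haω'.1]
  -- norm of difference of t's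
  have hdiffv : t ω - t ω' = (ε / sd) • (ω - ω') := by
    rw [ht, ht, smul_sub, add_sub_add_right_eq_sub]
  have hD : ‖t ω - t ω'‖ = ε / sd * (2 * Real.sqrt h) := by
    rw [hdiffv, norm_smul, Real.norm_eq_abs, abs_of_pos hesd0]
    congr 1
    have h1 : ‖ω - ω'‖ = Real.sqrt (∑ j, ‖(ω - ω') j‖ ^ 2) := by
      rw [EuclideanSpace.norm_eq]
    have hterm4 : ∀ j, ω j ≠ ω' j → ‖(ω - ω') j‖ ^ 2 = 4 := by
      intro j hc
      have hsub : (ω - ω') j = ω j - ω' j := rfl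
      rcases hω j with h1 | h1 <;> rcases hω' j with h2 | h2
      · exact absurd (h1.trans h2.symm) hc
      · rw [hsub, h1, h2]; norm_num [Real.norm_eq_abs]
      · rw [hsub, h1, h2]; norm_num [Real.norm_eq_abs]
      · exact absurd (h1.trans h2.symm) hc
    have hterm0 : ∀ j, ¬ ω j ≠ ω' j → ‖(ω - ω') j‖ ^ 2 = 0 := by
      intro j hc
      have hsub : (ω - ω') j = ω j - ω' j := rfl
      rw [hsub, not_not.mp hc, sub_self, norm_zero]
      norm_num
    have hsum : (∑ j, ‖(ω - ω') j‖ ^ 2) = 4 * h := by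
      rw [hhdef,
        ← Finset.sum_filter_add_sum_filter_not Finset.univ (fun j => ω j ≠ ω' j)
          (fun j => ‖(ω - ω') j‖ ^ 2)]
      rw [Finset.sum_congr rfl (fun j hj => hterm4 j (Finset.mem_filter.mp hj).2),
        Finset.sum_eq_zero (fun j hj => hterm0 j (Finset.mem_filter.mp hj).2),
        Finset.sum_const, add_zero, nsmul_eq_mul, mul_comm]
    rw [h1, hsum, show (4:ℝ) * h = 2 ^ 2 * h by norm_num, Real.sqrt_mul (by positivity),
      Real.sqrt_sq (by norm_num)]
  -- decomposition of θ difference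
  have hθd : θ ω - θ ω' = ‖t ω‖⁻¹ • (t ω - t ω') + (‖t ω‖⁻¹ - ‖t ω'‖⁻¹) • t ω' := by
    rw [hθ, hθ, smul_sub, sub_smul, sub_add_sub_cancel]
  have hcross : ‖(‖t ω‖⁻¹ - ‖t ω'‖⁻¹) • t ω'‖ = |‖t ω'‖ - ‖t ω‖| / ‖t ω‖ := by
    rw [norm_smul, Real.norm_eq_abs]
    rw [show ‖t ω‖⁻¹ - ‖t ω'‖⁻¹ = (‖t ω'‖ - ‖t ω‖) / (‖t ω‖ * ‖t ω'‖) by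
      field_simp]
    rw [abs_div, abs_of_pos (by positivity : (0:ℝ) < ‖t ω‖ * ‖t ω'‖)]
    field_simp
  have hfirst : ‖‖t ω‖⁻¹ • (t ω - t ω')‖ = ‖t ω - t ω'‖ / ‖t ω‖ := by
    rw [norm_smul, Real.norm_eq_abs, abs_of_pos (by positivity), inv_mul_eq_div]
  have hba : |‖t ω'‖ - ‖t ω‖| ≤ 8 * (ε / sd) := by
    rw [abs_le] at hkω hkω' ⊢
    constructor <;> [linarith [hkω.2, hkω'.1]; linarith [hkω.1, hkω'.2]]
  -- upper bound
  have hupper : ‖θ ω - θ ω'‖ ≤ (8 * ε / sd) * Real.sqrt h := by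
    have hba2 : |‖t ω'‖ - ‖t ω‖| ≤ ‖t ω - t ω'‖ := by
      have h6 := abs_norm_sub_norm_le (t ω') (t ω)
      rwa [show t ω' - t ω = -(t ω - t ω') by abel, norm_neg] at h6
    have htri : ‖θ ω - θ ω'‖ ≤ ‖t ω - t ω'‖ / ‖t ω‖ + |‖t ω'‖ - ‖t ω‖| / ‖t ω‖ := by
      rw [hθd]
      calc ‖‖t ω‖⁻¹ • (t ω - t ω') + (‖t ω‖⁻¹ - ‖t ω'‖⁻¹) • t ω'‖
          ≤ ‖‖t ω‖⁻¹ • (t ω - t ω')‖ + ‖(‖t ω‖⁻¹ - ‖t ω'‖⁻¹) • t ω'‖ := norm_add_le _ _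
        _ = ‖t ω - t ω'‖ / ‖t ω‖ + |‖t ω'‖ - ‖t ω‖| / ‖t ω‖ := by rw [hfirst, hcross]
    have h7 : ‖t ω - t ω'‖ / ‖t ω‖ + |‖t ω'‖ - ‖t ω‖| / ‖t ω‖ ≤ 4 * ‖t ω - t ω'‖ := by
      rw [← add_div, div_le_iff₀ haωpos]
      nlinarith [norm_nonneg (t ω - t ω'), haω.1]
    have h8 : 4 * ‖t ω - t ω'‖ = (8 * ε / sd) * Real.sqrt h := by
      rw [hD]; ring
    linarith
  -- lower bound
  have aux : ∀ x y : EuclideanSpace ℝ (Fin d), ‖x‖ - ‖y‖ ≤ ‖x + y‖ := by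
    intro x y
    have h1 := norm_add_le (x + y) (-y)
    rw [add_neg_cancel_right, norm_neg] at h1
    linarith
  have hrev : (‖t ω - t ω'‖ - |‖t ω'‖ - ‖t ω‖|) / ‖t ω‖ ≤ ‖θ ω - θ ω'‖ := by
    rw [hθd, sub_div]
    have h9 := aux (‖t ω‖⁻¹ • (t ω - t ω')) ((‖t ω‖⁻¹ - ‖t ω'‖⁻¹) • t ω')
    rw [hfirst, hcross] at h9
    linarith
  have hlower : (ε / sd) * (Real.sqrt h - 4) ≤ ‖θ ω - θ ω'‖ := by
    rcases le_or_gt (Real.sqrt h) 4 with hc | hc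
    · have h10 : (ε / sd) * (Real.sqrt h - 4) ≤ 0 :=
        mul_nonpos_of_nonneg_of_nonpos hesd0.le (by linarith)
      exact h10.trans (norm_nonneg _)
    · refine le_trans ?_ hrev
      rw [le_div_iff₀ haωpos, hD]
      nlinarith [hba, haω.2,
        mul_nonneg (mul_nonneg hesd0.le (by linarith : (0:ℝ) ≤ Real.sqrt h - 4))
          (by linarith [haω.2] : (0:ℝ) ≤ 3 / 2 - ‖t ω‖)]
  refine ⟨hlower, hupper, fun hh hdd => ?_⟩
  have hdd' : (256:ℝ) ≤ d := by exact_mod_cast hdd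
  have hsd16 : 16 ≤ sd := by nlinarith [hsd0.le]
  have hsqd4 : Real.sqrt ((d:ℝ) / 4) = sd / 2 := by
    rw [show (d:ℝ) / 4 = (sd / 2) ^ 2 by rw [div_pow, hsdsq]; norm_num]
    exact Real.sqrt_sq (by positivity)
  have hsh : sd / 2 ≤ Real.sqrt h := by
    rw [← hsqd4]
    exact Real.sqrt_le_sqrt hh
  have hsh8 : 8 ≤ Real.sqrt h := by linarith
  have hA : ε / (2 * sd) * Real.sqrt h ≤ (ε / sd) * (Real.sqrt h - 4) := by
    rw [div_mul_eq_mul_div, div_mul_eq_mul_div, div_le_div_iff₀ (by positivity) hsd0]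
    nlinarith [mul_nonneg (mul_nonneg hε.le hsd0.le) (by linarith : (0:ℝ) ≤ Real.sqrt h - 8)]
  have hB : ε / 4 ≤ ε / (2 * sd) * Real.sqrt h := by
    rw [div_mul_eq_mul_div, div_le_div_iff₀ (by norm_num) (by positivity)]
    nlinarith [mul_le_mul_of_nonneg_left hsh hε.le]
  exact ⟨hA.trans hlower, hB.trans (hA.trans hlower)⟩
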